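/- Let n ≥ 4 be even, let R be the quotient ring ℤ[a,b]/(ab, aⁿ − bⁿ), and let x and y denote the images of a and b in R. Let f be a ring automorphism of R that maps the additive subgroup ℤx + ℤy bijectively onto itself. Then there exist signs ε, δ ∈ {1, −1} such that (f(x), f(y)) = (ε·x, δ·y) or (f(x), f(y)) = (ε·y, δ·x). -/

import Mathlib

open MvPolynomial

/-- Coefficient of a low-degree monomial (with one vanishing exponent) in an element
of the ideal `(X0*X1, X0^n - X1^n)` vanishes. -/
lemma stmt9_coeff_aux (n : ℕ) (hn : 3 ≤ n) (m : Fin 2 →₀ ℕ) (hdeg : m 0 + m 1 < n)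
    (h01 : m 0 = 0 ∨ m 1 = 0) (f g : MvPolynomial (Fin 2) ℤ) :
    coeff m (f * (X 0 * X 1) + g * ((X 0 : MvPolynomial (Fin 2) ℤ) ^ n - X 1 ^ n)) = 0 := by
  classical
  have h1 : coeff m (f * (X 0 * X 1)) = 0 := by
    rcases h01 with h | h
    · rw [show f * (X 0 * X 1) = f * X 1 * X 0 by ring, coeff_mul_X']
      rw [if_neg]
      simp [Finsupp.mem_support_iff, h]
    · rw [show f * (X 0 * X 1) = f * X 0 * X 1 by ring, coeff_mul_X']
      rw [if_neg]
      simp [Finsupp.mem_support_iff, h]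
  have key : ∀ (i : Fin 2) (p : MvPolynomial (Fin 2) ℤ), coeff m (p * X i ^ n) = 0 := by
    intro i p
    rw [coeff_mul]
    apply Finset.sum_eq_zero
    rintro ⟨u, v⟩ huv
    rw [Finset.HasAntidiagonal.mem_antidiagonal] at huv
    rw [coeff_X_pow, if_neg, mul_zero]
    intro hv
    have hv' : Finsupp.single i n = v := hv
    have hmi : m i = u i + v i := by rw [← huv]; simp
    have hvn : v i = n := by rw [← hv']; simp
    have hi2 : i = 0 ∨ i = 1 := by omega
    rcases hi2 with rfl | rfl <;> omega
  rw [coeff_add, h1, zero_add, mul_sub, coeff_sub, key, key, sub_zero]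

/-- Extraction lemma: `c • X0^k + d • X1^k` in the ideal forces `c = d = 0`
for `0 < k < n`. -/
lemma stmt9_extract (n : ℕ) (hn : 3 ≤ n) (k : ℕ) (hk : 0 < k) (hkn : k < n) (c d : ℤ)
    (h : c • (X 0 : MvPolynomial (Fin 2) ℤ) ^ k + d • X 1 ^ k ∈
      Ideal.span {X 0 * X 1, (X 0 : MvPolynomial (Fin 2) ℤ) ^ n - X 1 ^ n}) :
    c = 0 ∧ d = 0 := by
  classical
  obtain ⟨f, g, hfg⟩ := Ideal.mem_span_pair.mp h
  have hne : (Finsupp.single (0 : Fin 2) k) ≠ (Finsupp.single (1 : Fin 2) k) := by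
    intro hcontra
    have := DFunLike.congr_fun hcontra (0 : Fin 2)
    simp [Finsupp.single_apply] at this
    omega
  constructor
  · have h0 := congrArg (coeff (Finsupp.single (0 : Fin 2) k)) hfg
    rw [stmt9_coeff_aux n hn _ (by simp [Finsupp.single_apply]; omega)
        (by right; simp [Finsupp.single_apply])] at h0
    rw [coeff_add, coeff_smul, coeff_smul, coeff_X_pow, coeff_X_pow,
      if_pos rfl, if_neg (Ne.symm hne)] at h0
    simpa using h0.symm
  · have h0 := congrArg (coeff (Finsupp.single (1 : Fin 2) k)) hfg
    rw [stmt9_coeff_aux n hn _ (by simp [Finsupp.single_apply]; omega)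
        (by left; simp [Finsupp.single_apply])] at h0
    rw [coeff_add, coeff_smul, coeff_smul, coeff_X_pow, coeff_X_pow,
      if_pos rfl, if_neg hne] at h0
    simpa using h0.symm

/-- Integer endgame: an integral matrix with a left inverse whose diagonal and
anti-diagonal products vanish is a signed permutation matrix. -/
lemma stmt9_int (p q r s m1 k1 m2 k2 : ℤ) (hpr : p * r = 0) (hqs : q * s = 0)
    (e1 : m1 * p + k1 * r = 1) (e2 : m1 * q + k1 * s = 0)
    (e3 : m2 * p + k2 * r = 0) (e4 : m2 * q + k2 * s = 1) :
    ((p = 1 ∨ p = -1) ∧ (s = 1 ∨ s = -1) ∧ q = 0 ∧ r = 0) ∨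
    ((q = 1 ∨ q = -1) ∧ (r = 1 ∨ r = -1) ∧ p = 0 ∧ s = 0) := by
  have hdet : (m1 * k2 - k1 * m2) * (p * s - q * r) = 1 := by
    linear_combination (m2 * q + k2 * s) * e1 + e4 - (m1 * q + k1 * s) * e3
  have hunit : p * s - q * r = 1 ∨ p * s - q * r = -1 :=
    Int.isUnit_iff.mp (IsUnit.of_mul_eq_one (a := p * s - q * r) (m1 * k2 - k1 * m2)
      (by linear_combination hdet))
  have hzero : (p * s) * (q * r) = 0 := by linear_combination q * s * hpr
  rcases mul_eq_zero.mp hzero with hps | hqr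
  · -- anti-diagonal case
    have hqr' : q * r = 1 ∨ q * r = -1 := by
      rcases hunit with h | h
      · right; linarith
      · left; linarith
    have hq : q = 1 ∨ q = -1 := by
      rcases hqr' with h | h
      · exact Int.isUnit_iff.mp (IsUnit.of_mul_eq_one (a := q) r h)
      · exact Int.isUnit_iff.mp (IsUnit.of_mul_eq_one (a := q) (-r) (by linarith))
    have hr : r = 1 ∨ r = -1 := by
      rcases hqr' with h | h
      · exact Int.isUnit_iff.mp (IsUnit.of_mul_eq_one (a := r) q (by linarith [mul_comm q r]))
      · exact Int.isUnit_iff.mp (IsUnit.of_mul_eq_one (a := r) (-q) (by linarith [mul_comm q r]))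
    have hp0 : p = 0 := by
      rcases mul_eq_zero.mp hpr with h | h
      · exact h
      · rcases hr with h' | h' <;> omega
    have hs0 : s = 0 := by
      rcases mul_eq_zero.mp hqs with h | h
      · rcases hq with h' | h' <;> omega
      · exact h
    exact Or.inr ⟨hq, hr, hp0, hs0⟩
  · -- diagonal case
    have hps' : p * s = 1 ∨ p * s = -1 := by
      rcases hunit with h | h
      · left; linarith
      · right; linarith
    have hp : p = 1 ∨ p = -1 := by
      rcases hps' with h | h
      · exact Int.isUnit_iff.mp (IsUnit.of_mul_eq_one (a := p) s h)
      · exact Int.isUnit_iff.mp (IsUnit.of_mul_eq_one (a := p) (-s) (by linarith))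
    have hs : s = 1 ∨ s = -1 := by
      rcases hps' with h | h
      · exact Int.isUnit_iff.mp (IsUnit.of_mul_eq_one (a := s) p (by linarith [mul_comm p s]))
      · exact Int.isUnit_iff.mp (IsUnit.of_mul_eq_one (a := s) (-p) (by linarith [mul_comm p s]))
    have hq0 : q = 0 := by
      rcases mul_eq_zero.mp hqs with h | h
      · exact h
      · rcases hs with h' | h' <;> omega
    have hr0 : r = 0 := by
      rcases mul_eq_zero.mp hpr with h | h
      · rcases hp with h' | h' <;> omega
      · exact h
    exact Or.inl ⟨hp, hs, hq0, hr0⟩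

abbrev Stmt9Q (n : ℕ) : Type :=
  MvPolynomial (Fin 2) ℤ ⧸
    (Ideal.span {X 0 * X 1, (X 0 : MvPolynomial (Fin 2) ℤ) ^ n - X 1 ^ n} :
      Ideal (MvPolynomial (Fin 2) ℤ))

set_option maxHeartbeats 1000000 in
set_option synthInstance.maxHeartbeats 400000 in
/-- Let `n ≥ 4` be even and `R = ℤ[a,b]/(ab, a^n - b^n)` with `x, y` the
images of `a, b`. Any ring automorphism `f` of `R` mapping the additive subgroup
`ℤx + ℤy` bijectively onto itself satisfies `(f x, f y) = (ε·x, δ·y)` or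
`(f x, f y) = (ε·y, δ·x)` for some signs `ε, δ ∈ {1, -1}`. -/
theorem stmt_9 (n : ℕ) (hn : 4 ≤ n) (heven : Even n)
    (x y : MvPolynomial (Fin 2) ℤ ⧸
      Ideal.span {X 0 * X 1, (X 0 : MvPolynomial (Fin 2) ℤ) ^ n - X 1 ^ n})
    (hx : x = Ideal.Quotient.mk _ (X 0)) (hy : y = Ideal.Quotient.mk _ (X 1))
    (f : (MvPolynomial (Fin 2) ℤ ⧸
        Ideal.span {X 0 * X 1, (X 0 : MvPolynomial (Fin 2) ℤ) ^ n - X 1 ^ n}) ≃+*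
      (MvPolynomial (Fin 2) ℤ ⧸
        Ideal.span {X 0 * X 1, (X 0 : MvPolynomial (Fin 2) ℤ) ^ n - X 1 ^ n}))
    (hf : (AddSubgroup.closure {x, y}).map (f : _ →+* _).toAddMonoidHom =
      AddSubgroup.closure {x, y}) :
    ∃ ε δ : ℤ, (ε = 1 ∨ ε = -1) ∧ (δ = 1 ∨ δ = -1) ∧
      ((f x = ε • x ∧ f y = δ • y) ∨ (f x = ε • y ∧ f y = δ • x)) := by
  classical
  have hn3 : 3 ≤ n := by omega
  -- key extraction lemma in the quotient
  have key : ∀ (k : ℕ), 0 < k → k < n → ∀ c d : ℤ,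
      (c : Stmt9Q n) * x ^ k + (d : Stmt9Q n) * y ^ k = 0 → c = 0 ∧ d = 0 := by
    intro k hk hkn c d h
    apply stmt9_extract n hn3 k hk hkn c d
    rw [← Ideal.Quotient.eq_zero_iff_mem]
    have heq : (Ideal.Quotient.mk
          (Ideal.span {X 0 * X 1, (X 0 : MvPolynomial (Fin 2) ℤ) ^ n - X 1 ^ n}))
          (c • (X 0 : MvPolynomial (Fin 2) ℤ) ^ k + d • X 1 ^ k)
        = (c : Stmt9Q n) * x ^ k + (d : Stmt9Q n) * y ^ k := by
      rw [map_add, map_zsmul, map_zsmul, map_pow, map_pow, ← hx, ← hy,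
        zsmul_eq_mul, zsmul_eq_mul]
    rw [heq, h]
  -- x * y = 0 in the quotient
  have hxy : x * y = 0 := by
    rw [hx, hy, ← map_mul, Ideal.Quotient.eq_zero_iff_mem]
    exact Ideal.subset_span (by left; rfl)
  -- memberships
  have hxm : x ∈ AddSubgroup.closure ({x, y} : Set (Stmt9Q n)) :=
    AddSubgroup.subset_closure (by left; rfl)
  have hym : y ∈ AddSubgroup.closure ({x, y} : Set (Stmt9Q n)) :=
    AddSubgroup.subset_closure (by right; rfl)
  have hfxm : f x ∈ AddSubgroup.closure ({x, y} : Set (Stmt9Q n)) := by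
    rw [← hf]; exact AddSubgroup.mem_map_of_mem _ hxm
  have hfym : f y ∈ AddSubgroup.closure ({x, y} : Set (Stmt9Q n)) := by
    rw [← hf]; exact AddSubgroup.mem_map_of_mem _ hym
  obtain ⟨p, q, hpq⟩ := AddSubgroup.mem_closure_pair.mp hfxm
  obtain ⟨r, s, hrs⟩ := AddSubgroup.mem_closure_pair.mp hfym
  have hFx : f x = (p : Stmt9Q n) * x + (q : Stmt9Q n) * y := by
    rw [← hpq, zsmul_eq_mul, zsmul_eq_mul]
  have hFy : f y = (r : Stmt9Q n) * x + (s : Stmt9Q n) * y := by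
    rw [← hrs, zsmul_eq_mul, zsmul_eq_mul]
  -- product relation: pr = 0, qs = 0
  have hprod : f x * f y = 0 := by rw [← map_mul, hxy, map_zero]
  have hquad : ((p * r : ℤ) : Stmt9Q n) * x ^ 2 + ((q * s : ℤ) : Stmt9Q n) * y ^ 2 = 0 := by
    rw [hFx, hFy] at hprod
    push_cast
    linear_combination hprod - ((p : Stmt9Q n) * s + (q : Stmt9Q n) * r) * hxy
  obtain ⟨hpr, hqs⟩ := key 2 (by omega) (by omega) _ _ hquad
  -- surjectivity: x and y are in the image
  have hxim : x ∈ (AddSubgroup.closure ({x, y} : Set (Stmt9Q n))).map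
      (f : Stmt9Q n →+* Stmt9Q n).toAddMonoidHom := by rw [hf]; exact hxm
  have hyim : y ∈ (AddSubgroup.closure ({x, y} : Set (Stmt9Q n))).map
      (f : Stmt9Q n →+* Stmt9Q n).toAddMonoidHom := by rw [hf]; exact hym
  obtain ⟨u, hu, hux⟩ := AddSubgroup.mem_map.mp hxim
  obtain ⟨v, hv, hvy⟩ := AddSubgroup.mem_map.mp hyim
  obtain ⟨m1, k1, hu'⟩ := AddSubgroup.mem_closure_pair.mp hu
  obtain ⟨m2, k2, hv'⟩ := AddSubgroup.mem_closure_pair.mp hv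
  have hux' : (m1 : Stmt9Q n) * f x + (k1 : Stmt9Q n) * f y = x := by
    have h1 : f (m1 • x + k1 • y) = x := by rw [hu']; exact hux
    rw [map_add, map_zsmul, map_zsmul, zsmul_eq_mul, zsmul_eq_mul] at h1
    exact h1
  have hvy' : (m2 : Stmt9Q n) * f x + (k2 : Stmt9Q n) * f y = y := by
    have h1 : f (m2 • x + k2 • y) = y := by rw [hv']; exact hvy
    rw [map_add, map_zsmul, map_zsmul, zsmul_eq_mul, zsmul_eq_mul] at h1
    exact h1
  have e1 : ((m1 * p + k1 * r - 1 : ℤ) : Stmt9Q n) * x ^ 1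
      + ((m1 * q + k1 * s : ℤ) : Stmt9Q n) * y ^ 1 = 0 := by
    push_cast
    rw [pow_one, pow_one]
    linear_combination hux' - (m1 : Stmt9Q n) * hFx - (k1 : Stmt9Q n) * hFy
  have e2 : ((m2 * p + k2 * r : ℤ) : Stmt9Q n) * x ^ 1
      + ((m2 * q + k2 * s - 1 : ℤ) : Stmt9Q n) * y ^ 1 = 0 := by
    push_cast
    rw [pow_one, pow_one]
    linear_combination hvy' - (m2 : Stmt9Q n) * hFx - (k2 : Stmt9Q n) * hFy
  obtain ⟨he1a, he1b⟩ := key 1 one_pos (by omega) _ _ e1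
  obtain ⟨he2a, he2b⟩ := key 1 one_pos (by omega) _ _ e2
  have he1a' : m1 * p + k1 * r = 1 := by linarith
  have he2b' : m2 * q + k2 * s = 1 := by linarith
  rcases stmt9_int p q r s m1 k1 m2 k2 hpr hqs he1a' he1b he2a he2b' with
    ⟨hp, hs, hq0, hr0⟩ | ⟨hq, hr, hp0, hs0⟩
  · refine ⟨p, s, hp, hs, Or.inl ⟨?_, ?_⟩⟩
    · rw [hFx, hq0, zsmul_eq_mul]; push_cast; ring
    · rw [hFy, hr0, zsmul_eq_mul]; push_cast; ring
  · refine ⟨q, r, hq, hr, Or.inr ⟨?_, ?_⟩⟩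
    · rw [hFx, hp0, zsmul_eq_mul]; push_cast; ring
    · rw [hFy, hs0, zsmul_eq_mul]; push_cast; ring
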